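/- Let g be the Lie algebra VI_0 ⊕ ℝ. Define r : g* → g by r(ε1) = e2, r(ε2) = −e1, r(ε3) = e4, r(ε4) = −e3 (the 2-vector e1∧e2 + e3∧e4). Then r is a bijective skew-symmetric solution of the CYBE, and for all real numbers n1, n2, n3, n4, the endomorphism n defined by n(e1) = n1·e1 + n3·e4, n(e2) = n1·e2 + n2·e4, n(e3) = n2·e1 − n3·e2 + n4·e3, n(e4) = n4·e4 makes (r, n) an r-n structure on g. -/

import Mathlib

noncomputable section

open Module

variable {g : Type*} [LieRing g] [LieAlgebra ℝ g]

/-- The coadjoint operator: `(coad X α) Y = -α ⁅X, Y⁆`. -/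
def coad (X : g) : Module.Dual ℝ g →ₗ[ℝ] Module.Dual ℝ g :=
  -(LieAlgebra.ad ℝ g X).dualMap

/-- A linear map `r : g* → g` is skew-symmetric if `α (r β) = -β (r α)`. -/
def IsSkew (r : Module.Dual ℝ g →ₗ[ℝ] g) : Prop :=
  ∀ α β : Module.Dual ℝ g, α (r β) = -β (r α)

/-- The Sklyanin bracket on `g*` defined by `r`. -/
def sklyanin (r : Module.Dual ℝ g →ₗ[ℝ] g) (α β : Module.Dual ℝ g) : Module.Dual ℝ g :=
  coad (r α) β - coad (r β) α

/-- `r` is a solution of the classical Yang-Baxter equation. -/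
def IsCYBE (r : Module.Dual ℝ g →ₗ[ℝ] g) : Prop :=
  ∀ α β : Module.Dual ℝ g, r (sklyanin r α β) = ⁅r α, r β⁆

/-- `n : g → g` is a Nijenhuis operator. -/
def IsNijenhuis (n : g →ₗ[ℝ] g) : Prop :=
  ∀ X Y : g, ⁅n X, n Y⁆ - n ⁅n X, Y⁆ - n ⁅X, n Y⁆ + n (n ⁅X, Y⁆) = 0

/-- `(r, n)` is an r-n structure on `g`. -/
def IsRN (r : Module.Dual ℝ g →ₗ[ℝ] g) (n : g →ₗ[ℝ] g) : Prop :=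
  IsSkew r ∧ IsCYBE r ∧ IsNijenhuis n ∧
    (∀ α : Module.Dual ℝ g, n (r α) = r (n.dualMap α)) ∧
    ∀ α β : Module.Dual ℝ g,
      coad (r α) (n.dualMap β) - coad (r β) (n.dualMap α)
        - n.dualMap (coad (r α) β) + n.dualMap (coad (r β) α) = 0

/-- The Nijenhuis concomitant of two endomorphisms. -/
def nijConcomitant (n' n : g →ₗ[ℝ] g) (X Y : g) : g :=
  ⁅n' X, n Y⁆ + ⁅n X, n' Y⁆ - n' ⁅n X, Y⁆ - n' ⁅X, n Y⁆ - n ⁅n' X, Y⁆ - n ⁅X, n' Y⁆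
    + n' (n ⁅X, Y⁆) + n (n' ⁅X, Y⁆)

/-- The underlying space of the Lie algebra `VI0R`: `ℝ⁴`. -/
def VI0R : Type := Fin 4 → ℝ

instance : AddCommGroup VI0R := inferInstanceAs (AddCommGroup (Fin 4 → ℝ))
instance : Module ℝ VI0R := inferInstanceAs (Module ℝ (Fin 4 → ℝ))

namespace VI0R

@[simp] theorem add_apply (x y : VI0R) (i : Fin 4) : (x + y) i = x i + y i := rfl
@[simp] theorem smul_apply (c : ℝ) (x : VI0R) (i : Fin 4) : (c • x) i = c * x i := rfl
@[simp] theorem neg_apply (x : VI0R) (i : Fin 4) : (-x) i = -(x i) := rfl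
@[simp] theorem sub_apply (x y : VI0R) (i : Fin 4) : (x - y) i = x i - y i := rfl
@[simp] theorem zero_apply (i : Fin 4) : (0 : VI0R) i = 0 := rfl

/-- The bracket of `VI0R`. -/
def br (x y : VI0R) : VI0R := fun i =>
  if i = 0 then x 0 * y 2 - x 2 * y 0
  else if i = 1 then -(x 1 * y 2 - x 2 * y 1)
  else if i = 2 then 0
  else 0

@[simp] theorem br_apply (x y : VI0R) (i : Fin 4) :
    br x y i = if i = 0 then x 0 * y 2 - x 2 * y 0
      else if i = 1 then -(x 1 * y 2 - x 2 * y 1)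
      else if i = 2 then 0
      else 0 := rfl

instance : LieRing VI0R where
  bracket := br
  add_lie x y z := by funext i; show br (x + y) z i = (br x z + br y z) i; simp; split_ifs <;> ring
  lie_add x y z := by funext i; show br x (y + z) i = (br x y + br x z) i; simp; split_ifs <;> ring
  lie_self x := by funext i; show br x x i = (0 : VI0R) i; simp; split_ifs <;> ring
  leibniz_lie x y z := by
    funext i; show br x (br y z) i = (br (br x y) z + br y (br x z)) i
    simp; split_ifs <;> ring

instance : LieAlgebra ℝ VI0R where
  lie_smul c x y := by
    funext i; show br x (c • y) i = (c • br x y) i; simp; split_ifs <;> ring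

/-- Basis vectors `e1, e2, e3, e4` (zero-indexed). -/
def e (i : Fin 4) : VI0R := fun j => if j = i then 1 else 0

/-- Dual basis `ε1, ε2, ε3, ε4` (zero-indexed). -/
def eps (i : Fin 4) : Module.Dual ℝ VI0R where
  toFun x := x i
  map_add' _ _ := rfl
  map_smul' _ _ := rfl

@[simp] theorem e_apply (i j : Fin 4) : e i j = if j = i then 1 else 0 := rfl

@[simp] theorem eps_apply (i : Fin 4) (x : VI0R) : eps i x = x i := rfl

@[simp] theorem lie_apply (x y : VI0R) (i : Fin 4) :
    ⁅x, y⁆ i = if i = 0 then x 0 * y 2 - x 2 * y 0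
      else if i = 1 then -(x 1 * y 2 - x 2 * y 1)
      else if i = 2 then 0
      else 0 := rfl

theorem decomp (x : VI0R) : x = x 0 • e 0 + x 1 • e 1 + x 2 • e 2 + x 3 • e 3 := by
  funext j; fin_cases j <;> simp

theorem dual_eval (α : Module.Dual ℝ VI0R) (x : VI0R) :
    α x = x 0 * α (e 0) + x 1 * α (e 1) + x 2 * α (e 2) + x 3 * α (e 3) := by
  conv_lhs => rw [decomp x]
  simp [smul_eq_mul]

end VI0R

@[simp] theorem coad_apply {g : Type*} [LieRing g] [LieAlgebra ℝ g]
    (X : g) (α : Module.Dual ℝ g) (y : g) :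
    coad X α y = -α ⁅X, y⁆ := by
  simp [coad]

/-- Wrap a function `Fin 4 → ℝ` as an element of `VI0R`. -/
def mkV (f : Fin 4 → ℝ) : VI0R := f

@[simp] theorem mkV_apply (f : Fin 4 → ℝ) (i : Fin 4) : mkV f i = f i := rfl

open VI0R in
/-- On the Lie algebra `VI_0 ⊕ ℝ` (bracket `[e1,e3] = e1`,
`[e2,e3] = -e2`), the map `r` with `r(ε1) = e2`, `r(ε2) = -e1`, `r(ε3) = e4`,
`r(ε4) = -e3` (the 2-vector `e1∧e2 + e3∧e4`) is a bijective skew-symmetric solution of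
the CYBE, and for all reals `n1, n2, n3, n4`, the endomorphism `n` with
`n(e1) = n1·e1 + n3·e4`, `n(e2) = n1·e2 + n2·e4`, `n(e3) = n2·e1 - n3·e2 + n4·e3`,
`n(e4) = n4·e4` makes `(r, n)` an r-n structure on `g`. -/
theorem vi0r_r_and_rn
    (r : Module.Dual ℝ VI0R →ₗ[ℝ] VI0R)
    (h1 : r (eps 0) = e 1) (h2 : r (eps 1) = -e 0)
    (h3 : r (eps 2) = e 3) (h4 : r (eps 3) = -e 2) :
    (IsSkew r ∧ Function.Bijective r ∧ IsCYBE r) ∧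
    ∀ (n1 n2 n3 n4 : ℝ) (n : VI0R →ₗ[ℝ] VI0R),
      n (e 0) = n1 • e 0 + n3 • e 3 →
      n (e 1) = n1 • e 1 + n2 • e 3 →
      n (e 2) = n2 • e 0 - n3 • e 1 + n4 • e 2 →
      n (e 3) = n4 • e 3 →
      IsRN r n := by
  have hr : ∀ α : Module.Dual ℝ VI0R, r α = mkV fun i =>
      if i = 0 then -(α (e 1)) else if i = 1 then α (e 0)
      else if i = 2 then -(α (e 3)) else α (e 2) := by
    intro α
    have hα : α = α (e 0) • eps 0 + α (e 1) • eps 1 + α (e 2) • eps 2 + α (e 3) • eps 3 := by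
      apply LinearMap.ext; intro x
      rw [dual_eval α x]
      simp [smul_eq_mul]; ring
    conv_lhs => rw [hα]
    simp only [map_add, map_smul, h1, h2, h3, h4]
    funext j; fin_cases j <;> simp
  have hskew : IsSkew r := by
    intro α β
    rw [dual_eval α (r β), dual_eval β (r α)]
    simp [hr]; ring
  have hbij : Function.Bijective r := by
    let s : VI0R →ₗ[ℝ] Module.Dual ℝ VI0R :=
      { toFun := fun x => x 1 • eps 0 - x 0 • eps 1 + x 3 • eps 2 - x 2 • eps 3
        map_add' := fun x y => by simp; module
        map_smul' := fun c x => by simp; module }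
    have hsr : ∀ α, s (r α) = α := by
      intro α
      apply LinearMap.ext; intro x
      rw [dual_eval α x]
      simp [s, hr]; ring
    have hrs : ∀ x, r (s x) = x := by
      intro x
      rw [hr (s x)]
      funext j; fin_cases j <;> simp [s]
    exact ⟨Function.LeftInverse.injective hsr, Function.RightInverse.surjective hrs⟩
  have hcybe : IsCYBE r := by
    intro α β
    obtain ⟨a0, a1, a2, a3, ha⟩ :
        ∃ a0 a1 a2 a3, ∀ x : VI0R, α x = x 0 * a0 + x 1 * a1 + x 2 * a2 + x 3 * a3 :=
      ⟨_, _, _, _, dual_eval α⟩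
    obtain ⟨b0, b1, b2, b3, hb⟩ :
        ∃ b0 b1 b2 b3, ∀ x : VI0R, β x = x 0 * b0 + x 1 * b1 + x 2 * b2 + x 3 * b3 :=
      ⟨_, _, _, _, dual_eval β⟩
    funext j
    rw [hr (sklyanin r α β)]
    fin_cases j <;>
      simp [sklyanin, hr, ha, hb] <;> ring
  refine ⟨⟨hskew, hbij, hcybe⟩, ?_⟩
  intro n1 n2 n3 n4 n hn0 hn1 hn2 hn3
  have hn : ∀ x : VI0R, n x = mkV fun i =>
      if i = 0 then n1 * x 0 + n2 * x 2
      else if i = 1 then n1 * x 1 - n3 * x 2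
      else if i = 2 then n4 * x 2
      else n3 * x 0 + n2 * x 1 + n4 * x 3 := by
    intro x
    conv_lhs => rw [decomp x]
    simp only [map_add, map_smul, hn0, hn1, hn2, hn3]
    funext j; fin_cases j <;> simp <;> ring
  refine ⟨hskew, hcybe, ?_, ?_, ?_⟩
  · intro X Y
    funext j; fin_cases j <;> simp [hn] <;> ring
  · intro α
    funext j
    rw [hr (n.dualMap α)]
    obtain ⟨a0, a1, a2, a3, ha⟩ :
        ∃ a0 a1 a2 a3, ∀ x : VI0R, α x = x 0 * a0 + x 1 * a1 + x 2 * a2 + x 3 * a3 :=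
      ⟨_, _, _, _, dual_eval α⟩
    fin_cases j <;> simp [hn, hr, ha] <;> ring
  · intro α β
    obtain ⟨a0, a1, a2, a3, ha⟩ :
        ∃ a0 a1 a2 a3, ∀ x : VI0R, α x = x 0 * a0 + x 1 * a1 + x 2 * a2 + x 3 * a3 :=
      ⟨_, _, _, _, dual_eval α⟩
    obtain ⟨b0, b1, b2, b3, hb⟩ :
        ∃ b0 b1 b2 b3, ∀ x : VI0R, β x = x 0 * b0 + x 1 * b1 + x 2 * b2 + x 3 * b3 :=
      ⟨_, _, _, _, dual_eval β⟩
    apply LinearMap.ext; intro x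
    simp [hn, hr, ha, hb]
    ring
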